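/- Let Σ = (G, σ) be a signed graph with connected underlying simple graph G and let w be a positive real-valued weight function on the edges. Then Σ is balanced if and only if the largest eigenvalue of the adjacency matrix A(Σ,w) (with entries σ(uv)·w(uv) on edges, 0 elsewhere) equals the largest eigenvalue of A(G,w) (with entries w(uv) on edges, 0 elsewhere). -/

import Mathlib

open SimpleGraph

/-- The sign (product of edge signs) of a walk in a graph, computed along its darts. -/
def walkSign {V : Type*} {G : SimpleGraph V} (σ : V → V → ℤ) {u v : V} (p : G.Walk u v) : ℤ :=
  (p.darts.map fun d => σ d.toProd.1 d.toProd.2).prod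

/-- `σ` is a signature on `G`: a symmetric function that is `±1`-valued on edges. -/
def IsSignature {V : Type*} (G : SimpleGraph V) (σ : V → V → ℤ) : Prop :=
  (∀ u v, σ u v = σ v u) ∧ ∀ u v, G.Adj u v → σ u v = 1 ∨ σ u v = -1

/-- A signed graph is balanced when every cycle has sign `+1`. -/
def IsBalanced {V : Type*} (G : SimpleGraph V) (σ : V → V → ℤ) : Prop :=
  ∀ (u : V) (p : G.Walk u u), p.IsCycle → walkSign σ p = 1

/-- A walk is a shortest path when it is a path whose length is the graph distance
between its endpoints. -/
def IsShortestPath {V : Type*} {G : SimpleGraph V} {u v : V} (p : G.Walk u v) : Prop :=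
  p.IsPath ∧ p.length = G.dist u v

open scoped Classical in
/-- `σmax u v = +1` if some shortest `u v`-path is positive, `-1` otherwise. -/
noncomputable def sigmaMax {V : Type*} (G : SimpleGraph V) (σ : V → V → ℤ) (u v : V) : ℤ :=
  if ∃ p : G.Walk u v, IsShortestPath p ∧ walkSign σ p = 1 then 1 else -1

open scoped Classical in
/-- `σmin u v = +1` if all shortest `u v`-paths are positive, `-1` otherwise. -/
noncomputable def sigmaMin {V : Type*} (G : SimpleGraph V) (σ : V → V → ℤ) (u v : V) : ℤ :=
  if ∀ p : G.Walk u v, IsShortestPath p → walkSign σ p = 1 then 1 else -1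

/-- The signed distance matrix `D^max`, with `(u,v)` entry `σmax(u,v)·d(u,v)`. -/
noncomputable def Dmax {V : Type*} (G : SimpleGraph V) (σ : V → V → ℤ) : Matrix V V ℝ :=
  Matrix.of fun u v => (sigmaMax G σ u v : ℝ) * (G.dist u v : ℝ)

/-- The signed distance matrix `D^min`, with `(u,v)` entry `σmin(u,v)·d(u,v)`. -/
noncomputable def Dmin {V : Type*} (G : SimpleGraph V) (σ : V → V → ℤ) : Matrix V V ℝ :=
  Matrix.of fun u v => (sigmaMin G σ u v : ℝ) * (G.dist u v : ℝ)

/-- Two vertices are distance-compatible if all shortest paths between them have the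
same sign. -/
def Compatible {V : Type*} (G : SimpleGraph V) (σ : V → V → ℤ) (u v : V) : Prop :=
  ∀ p q : G.Walk u v, IsShortestPath p → IsShortestPath q → walkSign σ p = walkSign σ q

/-- A signed graph is distance-compatible if every pair of vertices is
distance-compatible. -/
def IsCompatibleGraph {V : Type*} (G : SimpleGraph V) (σ : V → V → ℤ) : Prop :=
  ∀ u v, Compatible G σ u v

/-- The largest eigenvalue of a (symmetric) real matrix: the supremum of the set of real
roots of its characteristic polynomial. -/
noncomputable def largestEigenvalue {n : Type*} [Fintype n] [DecidableEq n]
    (M : Matrix n n ℝ) : ℝ :=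
  sSup {x : ℝ | M.charpoly.IsRoot x}


section WalkAux
variable {V : Type*} {G : SimpleGraph V} {σ : V → V → ℤ}


@[simp] lemma walkSign_nil {u : V} : walkSign σ (Walk.nil : G.Walk u u) = 1 := rfl

@[simp] lemma walkSign_cons {u v w : V} (h : G.Adj u v) (p : G.Walk v w) :
    walkSign σ (Walk.cons h p) = σ u v * walkSign σ p := by
  simp [walkSign]

@[simp] lemma walkSign_append {u v w : V} (p : G.Walk u v) (q : G.Walk v w) :
    walkSign σ (p.append q) = walkSign σ p * walkSign σ q := by
  simp [walkSign, Walk.darts_append]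

lemma walkSign_reverse (hs : ∀ u v, σ u v = σ v u) {u v : V} (p : G.Walk u v) :
    walkSign σ p.reverse = walkSign σ p := by
  induction p with
  | nil => rfl
  | cons h p ih =>
    rw [Walk.reverse_cons, walkSign_append, ih, walkSign_cons]
    simp [walkSign, hs _ _, mul_comm]

lemma walkSign_eq_one_or (hσ : IsSignature G σ) {u v : V} (p : G.Walk u v) :
    walkSign σ p = 1 ∨ walkSign σ p = -1 := by
  induction p with
  | nil => left; rfl
  | cons h p ih =>
    rw [walkSign_cons]
    rcases hσ.2 _ _ h with h1 | h1 <;> rcases ih with h2 | h2 <;> simp [h1, h2]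

lemma walkSign_mul_self (hσ : IsSignature G σ) {u v : V} (p : G.Walk u v) :
    walkSign σ p * walkSign σ p = 1 := by
  rcases walkSign_eq_one_or hσ p with h | h <;> simp [h]

/-- In a balanced signed graph, every closed walk has sign one. -/
lemma walkSign_closed (hσ : IsSignature G σ) (hb : IsBalanced G σ) :
    ∀ (u : V) (c : G.Walk u u), walkSign σ c = 1 := by
  suffices H : ∀ (n : ℕ) (u : V) (c : G.Walk u u), c.length ≤ n → walkSign σ c = 1 by
    exact fun u c => H c.length u c le_rfl
  intro n
  induction n with
  | zero =>
    intro u c hc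
    have : c.Nil := Walk.nil_iff_length_eq.mpr (Nat.le_zero.mp hc)
    rw [this.eq_nil]; rfl
  | succ n ih =>
    intro u c hc
    by_cases hnil : c.Nil
    · rw [hnil.eq_nil]; rfl
    obtain ⟨v, h, p, rfl⟩ := Walk.not_nil_iff.mp hnil
    by_cases hnd : p.support.Nodup
    · -- p is a path from v to u
      have hp : p.IsPath := Walk.IsPath.mk' hnd
      by_cases he : s(u, v) ∈ p.edges
      · -- then p must be the single edge v-u
        cases p with
        | nil => exact absurd h (G.irrefl)
        | @cons _ x _ h' p' =>
          rw [Walk.edges_cons, List.mem_cons] at he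
          rcases he with he | he
          · have hux : u = x := by
              rw [Sym2.eq_iff] at he
              rcases he with ⟨rfl, rfl⟩ | ⟨rfl, -⟩
              · exact absurd h (G.irrefl)
              · rfl
            subst hux
            have hp' : p' = Walk.nil := by
              have := Walk.isPath_iff_eq_nil.mp hp.of_cons
              exact this
            subst hp'
            rw [walkSign_cons, walkSign_cons, walkSign_nil, mul_one]
            rw [hσ.1 v u] at *
            rcases hσ.2 u v h with h1 | h1 <;> rw [h1] <;> ring
          · have hv : v ∉ p'.support := by
              have := hp.support_nodup
              rw [Walk.support_cons, List.nodup_cons] at this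
              exact this.1
            exact absurd (Walk.snd_mem_support_of_mem_edges p' he) hv
      · have : (Walk.cons h p).IsCycle := Path.cons_isCycle ⟨p, hp⟩ h he
        exact hb _ _ this
    · -- p has a repeated vertex x
      classical
      obtain ⟨x, hdup⟩ := List.exists_duplicate_iff_not_nodup.mpr hnd
      have hcount : 2 ≤ p.support.count x := List.duplicate_iff_two_le_count.mp hdup
      have hx : x ∈ p.support := hdup.mem
      set q1 := p.takeUntil x hx with hq1
      set q2 := p.dropUntil x hx with hq2
      have hspec : q1.append q2 = p := Walk.take_spec p hx
      have hcnt1 : q1.support.count x = 1 := Walk.count_support_takeUntil_eq_one p hx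
      have hxtail : x ∈ q2.support.tail := by
        have hsup : p.support = q1.support ++ q2.support.tail := by
          rw [← hspec, Walk.support_append]
        rw [hsup, List.count_append, hcnt1] at hcount
        exact List.count_pos_iff.mp (by omega)
      have hq2nil : ¬ q2.Nil := by
        intro hn
        rw [Walk.nil_iff_support_eq.mp hn] at hxtail
        simp at hxtail
      obtain ⟨y, h2, r, hq2eq⟩ := Walk.not_nil_iff.mp hq2nil
      have hxr : x ∈ r.support := by
        have : q2.support = x :: r.support := by rw [hq2eq, Walk.support_cons]
        rw [this] at hxtail
        exact hxtail
      set r1 := r.takeUntil x hxr with hr1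
      set r2 := r.dropUntil x hxr with hr2
      have hrspec : r1.append r2 = r := Walk.take_spec r hxr
      -- length bookkeeping
      have hlen : q1.length + (1 + (r1.length + r2.length)) = p.length := by
        have e1 : q1.length + q2.length = p.length := by
          rw [← hspec, Walk.length_append]
        have e2 : q2.length = 1 + (r1.length + r2.length) := by
          rw [hq2eq, Walk.length_cons, ← hrspec, Walk.length_append]; omega
        omega
      have hclen : p.length + 1 ≤ n + 1 := by
        simpa [Walk.length_cons] using hc
      -- the two shorter closed walks
      have hA : walkSign σ (Walk.cons h2 r1) = 1 := by
        apply ih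
        rw [Walk.length_cons]
        omega
      have hB : walkSign σ ((Walk.cons h q1).append r2) = 1 := by
        apply ih
        rw [Walk.length_append, Walk.length_cons]
        omega
      have hsplit : walkSign σ (Walk.cons h p)
          = σ u v * (walkSign σ q1 * (σ x y * (walkSign σ r1 * walkSign σ r2))) := by
        rw [walkSign_cons]
        congr 1
        calc walkSign σ p = walkSign σ (q1.append q2) := by rw [hspec]
          _ = walkSign σ q1 * walkSign σ q2 := walkSign_append _ _
          _ = walkSign σ q1 * (σ x y * (walkSign σ r1 * walkSign σ r2)) := by
              rw [hq2eq, walkSign_cons]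
              congr 2
              rw [← hrspec, walkSign_append]
      rw [walkSign_append, walkSign_cons] at hB
      rw [walkSign_cons] at hA
      have : σ u v * (walkSign σ q1 * (σ x y * (walkSign σ r1 * walkSign σ r2)))
          = (σ x y * walkSign σ r1) * (σ u v * (walkSign σ q1 * walkSign σ r2)) := by ring
      rw [hsplit, this, hA, one_mul]
      linear_combination hB

/-- In a balanced graph, any two walks with the same endpoints have the same sign. -/
lemma walkSign_eq_of_balanced (hσ : IsSignature G σ) (hb : IsBalanced G σ)
    {u v : V} (p q : G.Walk u v) : walkSign σ p = walkSign σ q := by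
  have h1 : walkSign σ (p.append q.reverse) = 1 := walkSign_closed hσ hb u _
  rw [walkSign_append, walkSign_reverse hσ.1] at h1
  rcases walkSign_eq_one_or hσ p with h2 | h2 <;>
    rcases walkSign_eq_one_or hσ q with h3 | h3 <;>
      rw [h2, h3] at h1 ⊢ <;> simp_all

/-- A balanced connected signed graph admits a switching function. -/
lemma exists_switching (hσ : IsSignature G σ) (hb : IsBalanced G σ) (hG : G.Connected) :
    ∃ θ : V → ℤ, (∀ v, θ v = 1 ∨ θ v = -1) ∧ ∀ u v, G.Adj u v → σ u v = θ u * θ v := by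
  have hne : Nonempty V := hG.nonempty
  obtain ⟨r⟩ := hne
  have hw : ∀ v : V, Nonempty (G.Walk r v) := fun v => (hG.preconnected r v)
  refine ⟨fun v => walkSign σ (hw v).some, fun v => walkSign_eq_one_or hσ _, ?_⟩
  intro u v huv
  have key : walkSign σ (hw v).some = walkSign σ ((hw u).some.append (Walk.cons huv Walk.nil)) :=
    walkSign_eq_of_balanced hσ hb _ _
  beta_reduce
  rw [key, walkSign_append, walkSign_cons, walkSign_nil, mul_one]
  set a := walkSign σ (hw u).some
  have ha : a * a = 1 := walkSign_mul_self hσ _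
  linear_combination (-(σ u v)) * ha


lemma walkSign_of_switching {θ : V → ℤ} (hθ : ∀ v, θ v * θ v = 1)
    (hsw : ∀ u v, G.Adj u v → σ u v = θ u * θ v) {u v : V} (p : G.Walk u v) :
    walkSign σ p = θ u * θ v := by
  induction p with
  | nil => exact (hθ _).symm
  | @cons a b c h p ih =>
    rw [walkSign_cons, ih, hsw _ _ h]
    linear_combination (θ a * θ c) * hθ b

lemma balanced_of_switching {θ : V → ℤ} (hθ : ∀ v, θ v * θ v = 1)
    (hsw : ∀ u v, G.Adj u v → σ u v = θ u * θ v) : IsBalanced G σ := by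
  intro u p _
  rw [walkSign_of_switching hθ hsw]
  exact hθ u

end WalkAux

section SpecAux
open Polynomial Matrix
namespace SpecTools
variable {n : Type*} [Fintype n] [DecidableEq n]

variable {n : Type*} [Fintype n] [DecidableEq n]

lemma charpoly_conj_inv (P Q M : Matrix n n ℝ) (hPQ : P * Q = 1) :
    (P * M * Q).charpoly = M.charpoly := by
  have hmapPQ : (C : ℝ →+* ℝ[X]).mapMatrix P * (C : ℝ →+* ℝ[X]).mapMatrix Q = 1 := by
    rw [← RingHom.map_mul, hPQ, RingHom.map_one]
  have hcm : charmatrix (P * M * Q)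
      = (C : ℝ →+* ℝ[X]).mapMatrix P * charmatrix M * (C : ℝ →+* ℝ[X]).mapMatrix Q := by
    rw [charmatrix, charmatrix]
    simp only [mul_sub, sub_mul]
    congr 1
    · -- P * scalar X * Q = scalar X
      symm
      have hcomm : Commute (Matrix.scalar n (X : ℝ[X])) ((C : ℝ →+* ℝ[X]).mapMatrix P) :=
        Matrix.scalar_commute _ (fun r' => Commute.all _ _) _
      calc (C : ℝ →+* ℝ[X]).mapMatrix P * Matrix.scalar n (X : ℝ[X]) * (C : ℝ →+* ℝ[X]).mapMatrix Q
          = Matrix.scalar n (X : ℝ[X]) * ((C : ℝ →+* ℝ[X]).mapMatrix P * (C : ℝ →+* ℝ[X]).mapMatrix Q) := by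
            rw [← hcomm.eq, Matrix.mul_assoc]
        _ = Matrix.scalar n (X : ℝ[X]) := by rw [hmapPQ, mul_one]
    · simp only [RingHom.mapMatrix_apply, ← Matrix.map_mul]
  rw [Matrix.charpoly, Matrix.charpoly, hcm, Matrix.det_mul, Matrix.det_mul,
    mul_comm ((C : ℝ →+* ℝ[X]).mapMatrix P).det, mul_assoc, ← Matrix.det_mul, hmapPQ]
  simp

lemma charpoly_diagonal (d : n → ℝ) :
    (Matrix.diagonal d).charpoly = ∏ i, (X - C (d i)) := by
  have : charmatrix (Matrix.diagonal d) = Matrix.diagonal fun i => X - C (d i) := by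
    ext i j
    by_cases h : i = j
    · subst h; simp
    · simp [charmatrix_apply_ne _ _ _ h, Matrix.diagonal_apply_ne _ h, Matrix.diagonal_apply_ne' _ h]
  rw [Matrix.charpoly, this, Matrix.det_diagonal]


variable {M : Matrix n n ℝ}

lemma star_eq_transpose (U : Matrix n n ℝ) : star U = Uᵀ := by
  ext i j
  simp [Matrix.star_apply]

lemma dot_symm (A : Matrix n n ℝ) (x y : n → ℝ) :
    x ⬝ᵥ (A *ᵥ y) = (Aᵀ *ᵥ x) ⬝ᵥ y := by
  rw [Matrix.mulVec_transpose, Matrix.dotProduct_mulVec]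

lemma charpoly_eq_prod (hM : M.IsHermitian) :
    M.charpoly = ∏ i, (X - C (hM.eigenvalues i)) := by
  have hspec := hM.spectral_theorem
  have hD : Matrix.diagonal ((RCLike.ofReal : ℝ → ℝ) ∘ hM.eigenvalues)
      = Matrix.diagonal hM.eigenvalues := by
    congr 1
  set U := (hM.eigenvectorUnitary : Matrix n n ℝ) with hU
  have hPQ : U * star U = 1 := by
    exact (Matrix.mem_unitaryGroup_iff).mp hM.eigenvectorUnitary.2
  calc M.charpoly = (U * Matrix.diagonal hM.eigenvalues * star U).charpoly := by
        rw [← hD]; exact congrArg Matrix.charpoly hspec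
    _ = (Matrix.diagonal hM.eigenvalues).charpoly := charpoly_conj_inv _ _ _ hPQ
    _ = ∏ i, (X - C (hM.eigenvalues i)) := charpoly_diagonal _
  done

lemma root_set_eq (hM : M.IsHermitian) :
    {x : ℝ | M.charpoly.IsRoot x} = ↑(Finset.univ.image hM.eigenvalues) := by
  ext x
  simp only [Set.mem_setOf_eq, IsRoot, charpoly_eq_prod hM, eval_prod]
  rw [Finset.prod_eq_zero_iff]
  simp only [Finset.mem_univ, true_and, eval_sub, eval_X, eval_C, Finset.coe_image,
    Finset.coe_univ, Set.image_univ, Set.mem_range]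
  constructor <;> rintro ⟨i, hi⟩ <;> exact ⟨i, by linarith⟩

lemma largestEigenvalue_eq_max [Nonempty n] (hM : M.IsHermitian) :
    largestEigenvalue M = (Finset.univ.image hM.eigenvalues).max'
      (Finset.image_nonempty.mpr Finset.univ_nonempty) := by
  rw [largestEigenvalue, root_set_eq hM]
  exact Finset.Nonempty.csSup_eq_max' _

lemma eigenvalue_le [Nonempty n] (hM : M.IsHermitian) (i : n) :
    hM.eigenvalues i ≤ largestEigenvalue M := by
  rw [largestEigenvalue_eq_max hM]
  exact Finset.le_max' _ _ (Finset.mem_image_of_mem _ (Finset.mem_univ i))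

lemma exists_eigenvalue_eq [Nonempty n] (hM : M.IsHermitian) :
    ∃ i, hM.eigenvalues i = largestEigenvalue M := by
  rw [largestEigenvalue_eq_max hM]
  obtain ⟨i, -, hi⟩ := Finset.mem_image.mp (Finset.max'_mem (Finset.univ.image hM.eigenvalues)
    (Finset.image_nonempty.mpr Finset.univ_nonempty))
  exact ⟨i, hi⟩

section Rayleigh

private noncomputable def Umat (hM : M.IsHermitian) : Matrix n n ℝ :=
  (hM.eigenvectorUnitary : Matrix n n ℝ)

lemma U_mul_Ut (hM : M.IsHermitian) : Umat hM * (Umat hM)ᵀ = 1 := by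
  rw [← star_eq_transpose]
  exact (Matrix.mem_unitaryGroup_iff).mp hM.eigenvectorUnitary.2

lemma Ut_mul_U (hM : M.IsHermitian) : (Umat hM)ᵀ * Umat hM = 1 := by
  rw [← star_eq_transpose]
  exact (Matrix.mem_unitaryGroup_iff').mp hM.eigenvectorUnitary.2

lemma M_eq (hM : M.IsHermitian) : M = Umat hM * Matrix.diagonal hM.eigenvalues * (Umat hM)ᵀ := by
  rw [← star_eq_transpose]
  have hD : Matrix.diagonal ((RCLike.ofReal : ℝ → ℝ) ∘ hM.eigenvalues)
      = Matrix.diagonal hM.eigenvalues := by congr 1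
  rw [Umat, ← hD]
  exact hM.spectral_theorem

lemma coord_eq (hM : M.IsHermitian) (x : n → ℝ) : Umat hM *ᵥ ((Umat hM)ᵀ *ᵥ x) = x := by
  rw [Matrix.mulVec_mulVec, U_mul_Ut, Matrix.one_mulVec]

lemma quadform_eq (hM : M.IsHermitian) (x : n → ℝ) :
    x ⬝ᵥ (M *ᵥ x) = ∑ i, hM.eigenvalues i * ((Umat hM)ᵀ *ᵥ x) i ^ 2 := by
  set c := (Umat hM)ᵀ *ᵥ x with hc
  have h1 : M *ᵥ x = Umat hM *ᵥ (Matrix.diagonal hM.eigenvalues *ᵥ c) := by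
    conv_lhs => rw [M_eq hM]
    rw [← Matrix.mulVec_mulVec, ← Matrix.mulVec_mulVec, hc]
  rw [h1, dot_symm, ← hc, dotProduct]
  simp only [Matrix.mulVec_diagonal]
  exact Finset.sum_congr rfl fun i _ => by ring

lemma normsq_eq (hM : M.IsHermitian) (x : n → ℝ) :
    x ⬝ᵥ x = ∑ i, ((Umat hM)ᵀ *ᵥ x) i ^ 2 := by
  set c := (Umat hM)ᵀ *ᵥ x with hc
  have h1 : x ⬝ᵥ x = c ⬝ᵥ c := by
    calc x ⬝ᵥ x = x ⬝ᵥ (Umat hM *ᵥ ((Umat hM)ᵀ *ᵥ x)) := by rw [coord_eq hM x]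
      _ = ((Umat hM)ᵀ *ᵥ x) ⬝ᵥ ((Umat hM)ᵀ *ᵥ x) := dot_symm _ _ _
      _ = c ⬝ᵥ c := rfl
  rw [h1, dotProduct]
  exact Finset.sum_congr rfl fun i _ => by ring


lemma rayleigh_le [Nonempty n] (hM : M.IsHermitian) (x : n → ℝ) :
    x ⬝ᵥ (M *ᵥ x) ≤ largestEigenvalue M * (x ⬝ᵥ x) := by
  rw [quadform_eq hM x, normsq_eq hM x, Finset.mul_sum]
  refine Finset.sum_le_sum fun i _ => ?_
  have h1 := eigenvalue_le hM i
  nlinarith [sq_nonneg (((Umat hM)ᵀ *ᵥ x) i)]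

lemma eigenvec_of_rayleigh_eq [Nonempty n] (hM : M.IsHermitian) (x : n → ℝ)
    (heq : x ⬝ᵥ (M *ᵥ x) = largestEigenvalue M * (x ⬝ᵥ x)) :
    M *ᵥ x = largestEigenvalue M • x := by
  classical
  set c := (Umat hM)ᵀ *ᵥ x with hc
  set L := largestEigenvalue M with hL
  have hsum : ∑ i, (L - hM.eigenvalues i) * c i ^ 2 = 0 := by
    have h3 : ∑ i, (L - hM.eigenvalues i) * c i ^ 2
        = L * (x ⬝ᵥ x) - x ⬝ᵥ (M *ᵥ x) := by
      rw [quadform_eq hM x, normsq_eq hM x, Finset.mul_sum, ← Finset.sum_sub_distrib]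
      exact Finset.sum_congr rfl fun i _ => by ring
    rw [h3, heq, sub_self]
  have hterm : ∀ i ∈ Finset.univ, (L - hM.eigenvalues i) * c i ^ 2 = 0 :=
    (Finset.sum_eq_zero_iff_of_nonneg fun i _ =>
      mul_nonneg (sub_nonneg.mpr (eigenvalue_le hM i)) (sq_nonneg _)).mp hsum
  have hDc : Matrix.diagonal hM.eigenvalues *ᵥ c = L • c := by
    ext i
    rw [Matrix.mulVec_diagonal, Pi.smul_apply, smul_eq_mul]
    rcases mul_eq_zero.mp (hterm i (Finset.mem_univ i)) with h | h
    · rw [sub_eq_zero] at h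
      rw [← h]
    · rw [sq_eq_zero_iff.mp h, mul_zero, mul_zero]
  have hMx : M *ᵥ x = Umat hM *ᵥ (Matrix.diagonal hM.eigenvalues *ᵥ c) := by
    conv_lhs => rw [M_eq hM]
    rw [← Matrix.mulVec_mulVec, ← Matrix.mulVec_mulVec, hc]
  rw [hMx, hDc, Matrix.mulVec_smul, coord_eq hM x]

lemma exists_top_eigenvector [Nonempty n] (hM : M.IsHermitian) :
    ∃ x : n → ℝ, 0 < x ⬝ᵥ x ∧ M *ᵥ x = largestEigenvalue M • x := by
  obtain ⟨i, hi⟩ := exists_eigenvalue_eq hM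
  refine ⟨⇑(hM.eigenvectorBasis i), ?_, ?_⟩
  · have hne : (⇑(hM.eigenvectorBasis i) : n → ℝ) ≠ 0 := by
      intro hcontra
      exact hM.eigenvectorBasis.orthonormal.ne_zero i
        (by ext j; exact congrFun hcontra j)
    have hnn : (0:ℝ) ≤ ⇑(hM.eigenvectorBasis i) ⬝ᵥ ⇑(hM.eigenvectorBasis i) :=
      Finset.sum_nonneg fun j _ => mul_self_nonneg _
    rcases hnn.lt_or_eq with h | h
    · exact h
    · exact absurd ((dotProduct_self_eq_zero).mp h.symm) hne
  · rw [hM.mulVec_eigenvectorBasis, hi]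

end Rayleigh

lemma isHermitian_of_symm (M : Matrix n n ℝ) (h : ∀ i j, M j i = M i j) :
    M.IsHermitian := by
  ext i j
  rw [Matrix.conjTranspose_apply, star_trivial, h]

end SpecTools
end SpecAux

open scoped Matrix

/-- Stanić's spectral criterion, weighted form. For a signed graph
`(G, σ)` with connected underlying simple graph and a positive edge-weight function `w`,
the signed graph is balanced if and only if the largest eigenvalues of `A(Σ,w)` and
`A(G,w)` coincide. -/
theorem balanced_iff_largestEigenvalue_eq {V : Type*} [Fintype V] [DecidableEq V]
    (G : SimpleGraph V) [DecidableRel G.Adj] (σ : V → V → ℤ) (w : V → V → ℝ)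
    (hσ : IsSignature G σ) (hG : G.Connected)
    (hwsym : ∀ u v, w u v = w v u) (hwpos : ∀ u v, G.Adj u v → 0 < w u v) :
    IsBalanced G σ ↔
      largestEigenvalue (Matrix.of fun u v => if G.Adj u v then (σ u v : ℝ) * w u v else 0) =
        largestEigenvalue (Matrix.of fun u v => if G.Adj u v then w u v else 0) := by
  classical
  haveI hne : Nonempty V := hG.nonempty
  set A1 : Matrix V V ℝ := Matrix.of fun u v => if G.Adj u v then (σ u v : ℝ) * w u v else 0
    with hA1def
  set A2 : Matrix V V ℝ := Matrix.of fun u v => if G.Adj u v then w u v else 0 with hA2def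
  have hH1 : A1.IsHermitian := by
    apply SpecTools.isHermitian_of_symm
    intro i j
    simp only [hA1def, Matrix.of_apply]
    by_cases h : G.Adj i j
    · rw [if_pos h, if_pos h.symm, hσ.1 j i, hwsym j i]
    · rw [if_neg h, if_neg fun hc => h hc.symm]
  have hH2 : A2.IsHermitian := by
    apply SpecTools.isHermitian_of_symm
    intro i j
    simp only [hA2def, Matrix.of_apply]
    by_cases h : G.Adj i j
    · rw [if_pos h, if_pos h.symm, hwsym j i]
    · rw [if_neg h, if_neg fun hc => h hc.symm]
  have hflat : ∀ (A : Matrix V V ℝ) (x : V → ℝ),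
      x ⬝ᵥ (A *ᵥ x) = ∑ p ∈ Finset.univ ×ˢ Finset.univ, x p.1 * (A p.1 p.2 * x p.2) := by
    intro A x
    rw [dotProduct, Finset.sum_product]
    refine Finset.sum_congr rfl fun u _ => ?_
    rw [Matrix.mulVec, dotProduct, Finset.mul_sum]
  constructor
  · -- balanced → equal largest eigenvalues
    intro hb
    obtain ⟨θ, hθpm, hθsw⟩ := exists_switching hσ hb hG
    set D : Matrix V V ℝ := Matrix.diagonal fun v => (θ v : ℝ) with hDdef
    have hDD : D * D = 1 := by
      rw [hDdef, Matrix.diagonal_mul_diagonal]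
      have : (fun v => (θ v : ℝ) * (θ v : ℝ)) = fun _ => (1 : ℝ) := by
        funext v
        rcases hθpm v with h | h <;> rw [h] <;> norm_num
      rw [this, Matrix.diagonal_one]
    have hconj : A1 = D * A2 * D := by
      ext i j
      rw [Matrix.mul_diagonal, Matrix.diagonal_mul]
      simp only [hA1def, hA2def, Matrix.of_apply]
      by_cases h : G.Adj i j
      · rw [if_pos h, if_pos h, hθsw i j h]
        push_cast
        ring
      · rw [if_neg h, if_neg h, mul_zero, zero_mul]
    have hcp : A1.charpoly = A2.charpoly := by
      rw [hconj]
      exact SpecTools.charpoly_conj_inv D D A2 hDD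
    unfold largestEigenvalue
    rw [hcp]
  · -- equal largest eigenvalues → balanced
    intro heq
    obtain ⟨y, hy0, hyeig⟩ := SpecTools.exists_top_eigenvector hH1
    set z : V → ℝ := fun v => |y v| with hzdef
    have hznonneg : ∀ v, 0 ≤ z v := fun v => abs_nonneg _
    have hz2 : z ⬝ᵥ z = y ⬝ᵥ y := by
      rw [dotProduct, dotProduct]
      exact Finset.sum_congr rfl fun v _ => abs_mul_abs_self _
    have e1 : y ⬝ᵥ (A1 *ᵥ y) = largestEigenvalue A1 * (y ⬝ᵥ y) := by
      rw [hyeig, dotProduct_smul, smul_eq_mul]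
    have hterm : ∀ p : V × V, y p.1 * (A1 p.1 p.2 * y p.2) ≤ z p.1 * (A2 p.1 p.2 * z p.2) := by
      rintro ⟨u, v⟩
      simp only [hA1def, hA2def, hzdef, Matrix.of_apply]
      by_cases h : G.Adj u v
      · rw [if_pos h, if_pos h]
        have hw := (hwpos u v h).le
        have habs : y u * y v ≤ |y u| * |y v| := by
          rw [← abs_mul]
          exact le_abs_self _
        have habs' : -(|y u| * |y v|) ≤ y u * y v := by
          rw [← abs_mul]
          exact neg_abs_le _
        rcases hσ.2 u v h with h1 | h1 <;> rw [h1] <;> push_cast <;> nlinarith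
      · rw [if_neg h, if_neg h, zero_mul, mul_zero, zero_mul, mul_zero]
    have s1 : y ⬝ᵥ (A1 *ᵥ y) ≤ z ⬝ᵥ (A2 *ᵥ z) := by
      rw [hflat, hflat]
      exact Finset.sum_le_sum fun p _ => hterm p
    have s2 : z ⬝ᵥ (A2 *ᵥ z) ≤ largestEigenvalue A2 * (z ⬝ᵥ z) :=
      SpecTools.rayleigh_le hH2 z
    have e2 : z ⬝ᵥ (A2 *ᵥ z) = largestEigenvalue A2 * (z ⬝ᵥ z) := by
      refine le_antisymm s2 ?_
      calc largestEigenvalue A2 * (z ⬝ᵥ z) = largestEigenvalue A1 * (y ⬝ᵥ y) := by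
            rw [heq, hz2]
        _ = y ⬝ᵥ (A1 *ᵥ y) := e1.symm
        _ ≤ z ⬝ᵥ (A2 *ᵥ z) := s1
    have e3 : y ⬝ᵥ (A1 *ᵥ y) = z ⬝ᵥ (A2 *ᵥ z) := by
      rw [e1, e2, heq, hz2]
    -- |y| is a top eigenvector of A2
    have hgeig : A2 *ᵥ z = largestEigenvalue A2 • z :=
      SpecTools.eigenvec_of_rayleigh_eq hH2 z e2
    -- z is strictly positive everywhere
    have hz0adj : ∀ u v, G.Adj u v → z u = 0 → z v = 0 := by
      intro u v huv hzu
      have hrow : ∑ x, A2 u x * z x = 0 := by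
        have hcf := congrFun hgeig u
        have hlhs : (A2 *ᵥ z) u = ∑ x, A2 u x * z x := rfl
        rw [hlhs] at hcf
        rw [hcf, Pi.smul_apply, smul_eq_mul, hzu, mul_zero]
      have hnn : ∀ x ∈ Finset.univ, 0 ≤ A2 u x * z x := by
        intro x _
        apply mul_nonneg _ (hznonneg x)
        simp only [hA2def, Matrix.of_apply]
        split
        · exact (hwpos _ _ (by assumption)).le
        · exact le_rfl
      have := (Finset.sum_eq_zero_iff_of_nonneg hnn).mp hrow v (Finset.mem_univ v)
      simp only [hA2def, Matrix.of_apply, if_pos huv] at this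
      rcases mul_eq_zero.mp this with h | h
      · exact absurd h (hwpos u v huv).ne'
      · exact h
    have hprop : ∀ (a b : V) (p : G.Walk a b), z a = 0 → z b = 0 := by
      intro a b p
      induction p with
      | nil => exact id
      | cons h q ih => exact fun ha => ih (hz0adj _ _ h ha)
    have hznz : ∀ v, z v ≠ 0 := by
      have hex : ∃ u, z u ≠ 0 := by
        by_contra hc
        push_neg at hc
        have : z ⬝ᵥ z = 0 := by
          rw [dotProduct]
          exact Finset.sum_eq_zero fun v _ => by rw [hc v, mul_zero]
        rw [hz2] at this
        exact hy0.ne' this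
      obtain ⟨u0, hu0⟩ := hex
      intro v hv
      exact hu0 (hprop v u0 (hG.preconnected v u0).some hv)
    have hynz : ∀ v, y v ≠ 0 := fun v hv => hznz v (by rw [hzdef]; simp [hv])
    -- termwise equality
    have hterm_eq : ∀ p : V × V,
        y p.1 * (A1 p.1 p.2 * y p.2) = z p.1 * (A2 p.1 p.2 * z p.2) := by
      rw [hflat, hflat] at e3
      intro p
      exact (Finset.sum_eq_sum_iff_of_le fun q _ => hterm q).mp e3 p
        (Finset.mem_product.mpr ⟨Finset.mem_univ _, Finset.mem_univ _⟩)
    -- construct the switching function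
    set θ : V → ℤ := fun v => if 0 < y v then 1 else -1 with hθdef
    have hθ2 : ∀ v, θ v * θ v = 1 := by
      intro v
      simp only [hθdef]
      split <;> norm_num
    have hsw : ∀ u v, G.Adj u v → σ u v = θ u * θ v := by
      intro u v huv
      have h0 := hterm_eq (u, v)
      simp only [hA1def, hA2def, hzdef, Matrix.of_apply, if_pos huv] at h0
      have key : (σ u v : ℝ) * (y u * y v) = |y u| * |y v| := by
        apply mul_left_cancel₀ (hwpos u v huv).ne'
        linear_combination h0
      rcases (hynz u).lt_or_gt with hu | hu <;> rcases (hynz v).lt_or_gt with hv | hv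
      · -- both negative
        rw [abs_of_neg hu, abs_of_neg hv] at key
        have hp : y u * y v ≠ 0 := mul_ne_zero hu.ne hv.ne
        have : (σ u v : ℝ) = 1 := by
          apply mul_right_cancel₀ hp
          rw [key]; ring
        have hs : σ u v = 1 := by exact_mod_cast this
        rw [hs]
        simp only [hθdef]
        rw [if_neg (not_lt.mpr hu.le), if_neg (not_lt.mpr hv.le)]
        norm_num
      · -- u negative, v positive
        rw [abs_of_neg hu, abs_of_pos hv] at key
        have hp : y u * y v ≠ 0 := mul_ne_zero hu.ne hv.ne'
        have : (σ u v : ℝ) = -1 := by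
          apply mul_right_cancel₀ hp
          rw [key]; ring
        have hs : σ u v = -1 := by exact_mod_cast this
        rw [hs]
        simp only [hθdef]
        rw [if_neg (not_lt.mpr hu.le), if_pos hv]
        norm_num
      · -- u positive, v negative
        rw [abs_of_pos hu, abs_of_neg hv] at key
        have hp : y u * y v ≠ 0 := mul_ne_zero hu.ne' hv.ne
        have : (σ u v : ℝ) = -1 := by
          apply mul_right_cancel₀ hp
          rw [key]; ring
        have hs : σ u v = -1 := by exact_mod_cast this
        rw [hs]
        simp only [hθdef]
        rw [if_pos hu, if_neg (not_lt.mpr hv.le)]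
        norm_num
      · -- both positive
        rw [abs_of_pos hu, abs_of_pos hv] at key
        have hp : y u * y v ≠ 0 := mul_ne_zero hu.ne' hv.ne'
        have : (σ u v : ℝ) = 1 := by
          apply mul_right_cancel₀ hp
          rw [key]; ring
        have hs : σ u v = 1 := by exact_mod_cast this
        rw [hs]
        simp only [hθdef]
        rw [if_pos hu, if_pos hv]
        norm_num
    exact balanced_of_switching hθ2 hsw
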